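/- For all m, n ≥ 5: (1) there exist two-sided ideals L' and L with quotient complexities m and n, with Σ_{L'} \ Σ_L ≠ ∅ and Σ_L \ Σ_{L'} ≠ ∅, such that κ(L' ∪ L) = (m+1)(n+1) and κ(L' ⊕ L) = (m+1)(n+1); (2) there exist two-sided ideals L' and L with quotient complexities m and n, with Σ_{L'} \ Σ_L ≠ ∅, such that κ(L' \ L) = m·n + m; and (3) there exist two-sided ideals L' and L with quotient complexities m and n such that κ(L' ∩ L) = m·n. (Thus the unrestricted complexities of boolean operations on two-sided ideals equal those on arbitrary regular languages.) -/

import Mathlib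

/-- The alphabet of a language: letters occurring in some word of `L`. -/
def alphabetOf {α : Type*} (L : Language α) : Set α :=
  {a | ∃ u v : List α, u ++ [a] ++ v ∈ L}

/-- The left quotient of `L` by a word `w`. -/
def leftQuotient {α : Type*} (L : Language α) (w : List α) : Language α :=
  {x | w ++ x ∈ L}

/-- The set of left quotients of `L` by words over the alphabet of `L`. -/
def quotientSet {α : Type*} (L : Language α) : Set (Language α) :=
  {K | ∃ w : List α, (∀ a ∈ w, a ∈ alphabetOf L) ∧ K = leftQuotient L w}

/-- `L` is regular with quotient complexity `m`: the set of its left quotients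
(by words over its own alphabet) is finite of cardinality exactly `m`. -/
def HasComplexity {α : Type*} (L : Language α) (m : ℕ) : Prop :=
  (quotientSet L).Finite ∧ (quotientSet L).ncard = m

/-- All words whose letters lie in `S`. -/
def starOf {α : Type*} (S : Set α) : Language α :=
  {w | ∀ a ∈ w, a ∈ S}

/-- A nonempty language `L` is a right ideal if `L · Σ_L^* = L`. -/
def IsRightIdeal {α : Type*} (L : Language α) : Prop :=
  (∃ w, w ∈ L) ∧ L * starOf (alphabetOf L) = L

/-- A nonempty language `L` is a left ideal if `Σ_L^* · L = L`. -/
def IsLeftIdeal {α : Type*} (L : Language α) : Prop :=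
  (∃ w, w ∈ L) ∧ starOf (alphabetOf L) * L = L

/-- A nonempty language `L` is a two-sided ideal if `Σ_L^* · L · Σ_L^* = L`. -/
def IsTwoSidedIdeal {α : Type*} (L : Language α) : Prop :=
  (∃ w, w ∈ L) ∧ starOf (alphabetOf L) * L * starOf (alphabetOf L) = L

/- ### helpers -/

def Cnt (S : Set (Fin 6)) (ℓ : Fin 6) (k : ℕ) : Language (Fin 6) :=
  {w | (∀ a ∈ w, a ∈ S) ∧ k ≤ w.count ℓ}

lemma mem_Cnt {S : Set (Fin 6)} {ℓ k w} :
    w ∈ Cnt S ℓ k ↔ (∀ a ∈ w, a ∈ S) ∧ k ≤ w.count ℓ := Iff.rfl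

lemma mem_alphabetOf_of {L : Language (Fin 6)} {w : List (Fin 6)} {a : Fin 6}
    (hw : w ∈ L) (ha : a ∈ w) : a ∈ alphabetOf L := by
  obtain ⟨u, v, rfl⟩ := List.append_of_mem ha
  exact ⟨u, v, by simpa using hw⟩

lemma alphabetOf_subset_of {L : Language (Fin 6)} {S : Set (Fin 6)}
    (h : ∀ w ∈ L, ∀ a ∈ w, a ∈ S) : alphabetOf L ⊆ S := by
  rintro a ⟨u, v, huv⟩
  exact h _ huv a (by simp)

lemma alphabetOf_Cnt {S : Set (Fin 6)} {ℓ k} (hℓ : ℓ ∈ S) (hk : 1 ≤ k) :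
    alphabetOf (Cnt S ℓ k) = S := by
  apply Set.Subset.antisymm (alphabetOf_subset_of fun w hw => hw.1)
  intro a ha
  refine mem_alphabetOf_of (L := Cnt S ℓ k) (w := List.replicate k ℓ ++ [a]) ?_ (by simp)
  constructor
  · intro b hb
    rcases List.mem_append.1 hb with hb | hb
    · rw [List.eq_of_mem_replicate hb]; exact hℓ
    · simp at hb; subst hb; exact ha
  · simp [List.count_append]

lemma isTwoSidedIdeal_Cnt {S : Set (Fin 6)} {ℓ k} (hℓ : ℓ ∈ S) (hk : 1 ≤ k) :
    IsTwoSidedIdeal (Cnt S ℓ k) := by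
  constructor
  · exact ⟨List.replicate k ℓ,
      fun b hb => by rw [List.eq_of_mem_replicate hb]; exact hℓ, by simp⟩
  · rw [alphabetOf_Cnt hℓ hk]
    ext w
    constructor
    · rintro h
      rcases Language.mem_mul.1 h with ⟨uv, huv, z, hz, rfl⟩
      rcases Language.mem_mul.1 huv with ⟨u, hu, v, hv, rfl⟩
      refine ⟨?_, ?_⟩
      · intro a ha
        rcases List.mem_append.1 ha with ha | ha
        · rcases List.mem_append.1 ha with ha | ha
          · exact hu a ha
          · exact hv.1 a ha
        · exact hz a ha
      · have := hv.2
        simp only [List.count_append]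
        omega
    · intro hw
      refine Language.mem_mul.2 ⟨[] ++ w, Language.mem_mul.2 ⟨[], ?_, w, hw, rfl⟩, [], ?_, by simp⟩
      · intro a ha; simp at ha
      · intro a ha; simp at ha

lemma leftQuotient_Cnt_of {S : Set (Fin 6)} {ℓ k} {w : List (Fin 6)}
    (hw : ∀ a ∈ w, a ∈ S) :
    leftQuotient (Cnt S ℓ k) w = Cnt S ℓ (k - w.count ℓ) := by
  ext x
  simp only [leftQuotient, Set.mem_setOf_eq, mem_Cnt, List.mem_append, List.count_append]
  constructor
  · rintro ⟨h1, h2⟩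
    exact ⟨fun a ha => h1 a (Or.inr ha), by omega⟩
  · rintro ⟨h1, h2⟩
    exact ⟨fun a ha => ha.elim (hw a) (h1 a), by omega⟩

lemma leftQuotient_Cnt_of_not {S : Set (Fin 6)} {ℓ k} {w : List (Fin 6)}
    (hw : ¬ ∀ a ∈ w, a ∈ S) :
    leftQuotient (Cnt S ℓ k) w = 0 := by
  ext x
  simp only [leftQuotient, Set.mem_setOf_eq, mem_Cnt]
  constructor
  · rintro ⟨h1, -⟩
    exact absurd (fun a ha => h1 a (List.mem_append.2 (Or.inl ha))) hw
  · rintro h; exact h.elim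

lemma replicate_mem_Cnt {S : Set (Fin 6)} {ℓ : Fin 6} {k i : ℕ} (hℓ : ℓ ∈ S) :
    List.replicate i ℓ ∈ Cnt S ℓ k ↔ k ≤ i := by
  constructor
  · rintro ⟨-, h⟩
    simpa using h
  · intro h
    exact ⟨fun a ha => by rw [List.eq_of_mem_replicate ha]; exact hℓ, by simpa using h⟩

lemma Cnt_inj {S : Set (Fin 6)} {ℓ : Fin 6} (hℓ : ℓ ∈ S) {r r' : ℕ}
    (h : Cnt S ℓ r = Cnt S ℓ r') : r = r' := by
  have h1 : List.replicate r' ℓ ∈ Cnt S ℓ r' := (replicate_mem_Cnt hℓ).2 le_rfl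
  have h2 : List.replicate r ℓ ∈ Cnt S ℓ r := (replicate_mem_Cnt hℓ).2 le_rfl
  rw [← h] at h1
  rw [h] at h2
  exact le_antisymm ((replicate_mem_Cnt hℓ).1 h1) ((replicate_mem_Cnt hℓ).1 h2)

/- ### master lemma -/

lemma hasComplexity_of {X : Language (Fin 6)} {A : Set (Fin 6)} {σ : Type}
    (G : σ → Language (Fin 6)) (Idx : Finset σ)
    (halpha : alphabetOf X = A)
    (hquot : ∀ w : List (Fin 6), (∀ a ∈ w, a ∈ A) → ∃ p ∈ Idx, leftQuotient X w = G p)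
    (hreach : ∀ p ∈ Idx, ∃ w : List (Fin 6), (∀ a ∈ w, a ∈ A) ∧ leftQuotient X w = G p)
    (hinj : Set.InjOn G ↑Idx) :
    HasComplexity X Idx.card := by
  have hset : quotientSet X = G '' ↑Idx := by
    ext K
    constructor
    · rintro ⟨w, hw, rfl⟩
      rw [halpha] at hw
      obtain ⟨p, hp, hq⟩ := hquot w hw
      exact ⟨p, hp, hq.symm⟩
    · rintro ⟨p, hp, rfl⟩
      obtain ⟨w, hw, hq⟩ := hreach p hp
      exact ⟨w, by rw [halpha]; exact hw, hq.symm⟩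
  constructor
  · rw [hset]; exact Idx.finite_toSet.image G
  · rw [hset, Set.ncard_image_of_injOn hinj, Set.ncard_coe_finset]

lemma hasComplexity_Cnt {S : Set (Fin 6)} {ℓ k} (hℓ : ℓ ∈ S) (hk : 1 ≤ k) :
    HasComplexity (Cnt S ℓ k) (k + 1) := by
  have := hasComplexity_of (X := Cnt S ℓ k) (A := S) (Cnt S ℓ) (Finset.Iic k)
    (alphabetOf_Cnt hℓ hk)
    (fun w hw => ⟨k - w.count ℓ, by simp, leftQuotient_Cnt_of hw⟩)
    (fun p hp => by
      have hp' : p ≤ k := Finset.mem_Iic.1 hp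
      refine ⟨List.replicate (k - p) ℓ,
        fun a ha => by rw [List.eq_of_mem_replicate ha]; exact hℓ, ?_⟩
      rw [leftQuotient_Cnt_of (fun a ha => by rw [List.eq_of_mem_replicate ha]; exact hℓ)]
      rw [List.count_replicate_self, Nat.sub_sub_self hp'])
    (fun r _ r' _ h => Cnt_inj hℓ h)
  rwa [Nat.card_Iic] at this


/- ### block words -/

lemma blocks_mem_Cnt {S : Set (Fin 6)} {ℓ x y : Fin 6} {i j k : ℕ} :
    (List.replicate i x ++ List.replicate j y) ∈ Cnt S ℓ k ↔
      ((i ≠ 0 → x ∈ S) ∧ (j ≠ 0 → y ∈ S)) ∧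
        k ≤ (if x = ℓ then i else 0) + (if y = ℓ then j else 0) := by
  simp only [mem_Cnt, List.mem_append, List.mem_replicate, List.count_append,
    List.count_replicate, beq_iff_eq]
  constructor
  · rintro ⟨hmem, hc⟩
    exact ⟨⟨fun hi => hmem x (Or.inl ⟨hi, rfl⟩), fun hj => hmem y (Or.inr ⟨hj, rfl⟩)⟩, hc⟩
  · rintro ⟨⟨hx, hy⟩, hc⟩
    refine ⟨?_, hc⟩
    rintro a (⟨hi, rfl⟩ | ⟨hj, rfl⟩)
    exacts [hx hi, hy hj]

lemma blocks_forall {A : Set (Fin 6)} {x y : Fin 6} {i j : ℕ}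
    (hx : x ∈ A) (hy : y ∈ A) :
    ∀ a ∈ (List.replicate i x ++ List.replicate j y), a ∈ A := by
  intro a ha
  rcases List.mem_append.1 ha with h | h
  · rw [List.eq_of_mem_replicate h]; exact hx
  · rw [List.eq_of_mem_replicate h]; exact hy

def S01 : Set (Fin 6) := {0, 1}

lemma mem_S01_0 : (0 : Fin 6) ∈ S01 := by left; rfl
lemma mem_S01_1 : (1 : Fin 6) ∈ S01 := by right; rfl

lemma leftQuotient_inf (A B : Language (Fin 6)) (w : List (Fin 6)) :
    leftQuotient (A ⊓ B) w = leftQuotient A w ⊓ leftQuotient B w := rfl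

lemma leftQuotient_sup (A B : Language (Fin 6)) (w : List (Fin 6)) :
    leftQuotient (A ⊔ B) w = leftQuotient A w ⊔ leftQuotient B w := rfl

lemma leftQuotient_sdiff (A B : Language (Fin 6)) (w : List (Fin 6)) :
    leftQuotient (A \ B) w = leftQuotient A w \ leftQuotient B w := rfl

lemma G3_mem {r s i j : ℕ} :
    (List.replicate i (0 : Fin 6) ++ List.replicate j (1 : Fin 6)) ∈
      (Cnt S01 0 r ⊓ Cnt S01 1 s) ↔ r ≤ i ∧ s ≤ j := by
  have h1 : (List.replicate i (0 : Fin 6) ++ List.replicate j (1 : Fin 6)) ∈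
      Cnt S01 0 r ↔ r ≤ i := by
    rw [blocks_mem_Cnt]
    simp [mem_S01_0, mem_S01_1]
  have h2 : (List.replicate i (0 : Fin 6) ++ List.replicate j (1 : Fin 6)) ∈
      Cnt S01 1 s ↔ s ≤ j := by
    rw [blocks_mem_Cnt]
    simp [mem_S01_0, mem_S01_1]
  exact and_congr h1 h2

lemma part_inter {k1 k2 : ℕ} (h1 : 1 ≤ k1) (h2 : 1 ≤ k2) :
    HasComplexity (Cnt S01 0 k1 ⊓ Cnt S01 1 k2) ((k1 + 1) * (k2 + 1)) := by
  have halpha : alphabetOf (Cnt S01 0 k1 ⊓ Cnt S01 1 k2) = S01 := by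
    apply Set.Subset.antisymm (alphabetOf_subset_of fun w hw => hw.1.1)
    intro a ha
    have hW : (List.replicate k1 (0:Fin 6) ++ List.replicate k2 (1:Fin 6)) ∈
        (Cnt S01 0 k1 ⊓ Cnt S01 1 k2) := G3_mem.2 ⟨le_rfl, le_rfl⟩
    rcases ha with rfl | rfl
    · exact mem_alphabetOf_of hW (by simp [List.mem_replicate]; omega)
    · exact mem_alphabetOf_of hW (by simp [List.mem_replicate]; omega)
  have := hasComplexity_of (X := Cnt S01 0 k1 ⊓ Cnt S01 1 k2) (A := S01)
    (fun p : ℕ × ℕ => Cnt S01 0 p.1 ⊓ Cnt S01 1 p.2)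
    (Finset.Iic k1 ×ˢ Finset.Iic k2)
    halpha
    (fun w hw => by
      refine ⟨(k1 - w.count 0, k2 - w.count 1), by simp, ?_⟩
      rw [leftQuotient_inf, leftQuotient_Cnt_of hw, leftQuotient_Cnt_of hw])
    (fun p hp => by
      simp only [Finset.mem_product, Finset.mem_Iic] at hp
      refine ⟨List.replicate (k1 - p.1) 0 ++ List.replicate (k2 - p.2) 1,
        blocks_forall mem_S01_0 mem_S01_1, ?_⟩
      have hw : ∀ a ∈ (List.replicate (k1 - p.1) (0:Fin 6) ++
          List.replicate (k2 - p.2) (1:Fin 6)), a ∈ S01 :=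
        blocks_forall mem_S01_0 mem_S01_1
      rw [leftQuotient_inf, leftQuotient_Cnt_of hw, leftQuotient_Cnt_of hw]
      simp only [List.count_append, List.count_replicate, beq_iff_eq]
      norm_num
      rw [Nat.sub_sub_self hp.1, Nat.sub_sub_self hp.2])
    (by
      rintro ⟨r, s⟩ - ⟨r', s'⟩ - h
      have h' : Cnt S01 0 r ⊓ Cnt S01 1 s = Cnt S01 0 r' ⊓ Cnt S01 1 s' := h
      have hA : (List.replicate r (0:Fin 6) ++ List.replicate s (1:Fin 6)) ∈
          (Cnt S01 0 r ⊓ Cnt S01 1 s) := G3_mem.2 ⟨le_rfl, le_rfl⟩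
      have hB : (List.replicate r' (0:Fin 6) ++ List.replicate s' (1:Fin 6)) ∈
          (Cnt S01 0 r' ⊓ Cnt S01 1 s') := G3_mem.2 ⟨le_rfl, le_rfl⟩
      rw [h'] at hA
      rw [← h'] at hB
      have h1 := G3_mem.1 hA
      have h2 := G3_mem.1 hB
      have : r = r' ∧ s = s' := ⟨by omega, by omega⟩
      simp [Prod.ext_iff, this.1, this.2])
  simpa [Nat.card_Iic] using this


/- ### part 2 : difference -/

def S012 : Set (Fin 6) := {0, 1, 2}

lemma mem_S012_0 : (0 : Fin 6) ∈ S012 := by left; rfl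
lemma mem_S012_1 : (1 : Fin 6) ∈ S012 := by right; left; rfl
lemma mem_S012_2 : (2 : Fin 6) ∈ S012 := by right; right; rfl
lemma not_mem_S01_2 : (2 : Fin 6) ∉ S01 := by
  rintro (h | h) <;> simp_all [S01] <;> omega

lemma mem_sdiff' {A B : Language (Fin 6)} {x} : x ∈ A \ B ↔ x ∈ A ∧ x ∉ B := Iff.rfl
lemma mem_sup' {A B : Language (Fin 6)} {x} : x ∈ A ⊔ B ↔ x ∈ A ∨ x ∈ B := Iff.rfl
lemma mem_zero' {x} : x ∈ (0 : Language (Fin 6)) ↔ False := Iff.rfl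

/-- membership of the `0^t 2` test word -/
lemma x2_memA {t r : ℕ} :
    (List.replicate t (0:Fin 6) ++ List.replicate 1 2) ∈ Cnt S012 0 r ↔ r ≤ t := by
  rw [blocks_mem_Cnt]
  simp [mem_S012_0, mem_S012_2]

lemma x2_notmemB {t s : ℕ} :
    (List.replicate t (0:Fin 6) ++ List.replicate 1 2) ∉ Cnt S01 1 s := by
  intro h
  rw [blocks_mem_Cnt] at h
  exact not_mem_S01_2 (h.1.2 one_ne_zero)

lemma x2_memB' {t : ℕ} (o : Option ℕ) :
    (List.replicate t (0:Fin 6) ++ List.replicate 1 2) ∉ o.elim (0 : Language (Fin 6)) (Cnt S01 1) := by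
  cases o with
  | none => exact fun h => h
  | some s => exact x2_notmemB

lemma y2_memA {r t : ℕ} :
    (List.replicate r (0:Fin 6) ++ List.replicate t 1) ∈ Cnt S012 0 r := by
  rw [blocks_mem_Cnt]
  simp [mem_S012_0, mem_S012_1]

lemma y2_memB {r t s : ℕ} :
    (List.replicate r (0:Fin 6) ++ List.replicate t 1) ∈ Cnt S01 1 s ↔ s ≤ t := by
  rw [blocks_mem_Cnt]
  simp [mem_S01_0, mem_S01_1]

lemma part_diff {k1 k2 : ℕ} (h1 : 1 ≤ k1) (h2 : 2 ≤ k2) :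
    HasComplexity (Cnt S012 0 k1 \ Cnt S01 1 k2) ((k1 + 1) * (k2 + 2)) := by
  have hX2 : (List.replicate k1 (0:Fin 6) ++ List.replicate 1 2) ∈
      (Cnt S012 0 k1 \ Cnt S01 1 k2) := ⟨x2_memA.2 le_rfl, x2_notmemB⟩
  have hX1 : (List.replicate k1 (0:Fin 6) ++ List.replicate 1 1) ∈
      (Cnt S012 0 k1 \ Cnt S01 1 k2) := by
    refine ⟨?_, ?_⟩
    · apply blocks_mem_Cnt.2; simp [mem_S012_0, mem_S012_1]
    · intro h
      replace h := blocks_mem_Cnt.1 h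
      have := h.2
      simp at this
      omega
  have halpha : alphabetOf (Cnt S012 0 k1 \ Cnt S01 1 k2) = S012 := by
    apply Set.Subset.antisymm (alphabetOf_subset_of fun w hw => hw.1.1)
    rintro a (rfl | rfl | rfl)
    · exact mem_alphabetOf_of hX2 (by simp [List.mem_replicate]; omega)
    · exact mem_alphabetOf_of hX1 (by simp [List.mem_replicate])
    · exact mem_alphabetOf_of hX2 (by simp [List.mem_replicate])
  have := hasComplexity_of (X := Cnt S012 0 k1 \ Cnt S01 1 k2) (A := S012)
    (fun p : ℕ × Option ℕ => Cnt S012 0 p.1 \ p.2.elim 0 (Cnt S01 1))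
    (Finset.Iic k1 ×ˢ Finset.insertNone (Finset.Iic k2))
    halpha
    (fun w hw => by
      by_cases h : ∀ a ∈ w, a ∈ S01
      · refine ⟨(k1 - w.count 0, some (k2 - w.count 1)), by simp, ?_⟩
        rw [leftQuotient_sdiff, leftQuotient_Cnt_of hw, leftQuotient_Cnt_of h]
        rfl
      · refine ⟨(k1 - w.count 0, none), by simp, ?_⟩
        rw [leftQuotient_sdiff, leftQuotient_Cnt_of hw, leftQuotient_Cnt_of_not h]
        rfl)
    (fun p hp => by
      obtain ⟨r, o⟩ := p
      simp only [Finset.mem_product, Finset.mem_Iic, Finset.mem_insertNone] at hp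
      obtain ⟨hp1, hp2⟩ := hp
      cases o with
      | none =>
        refine ⟨List.replicate (k1 - r) 0 ++ List.replicate 1 2,
          blocks_forall mem_S012_0 mem_S012_2, ?_⟩
        rw [leftQuotient_sdiff, leftQuotient_Cnt_of (blocks_forall mem_S012_0 mem_S012_2),
          leftQuotient_Cnt_of_not (fun hall => not_mem_S01_2 (hall 2 (by simp)))]
        have hc : (List.replicate (k1 - r) (0:Fin 6) ++ List.replicate 1 2).count 0
            = k1 - r := by
          simp [List.count_append, List.count_replicate]
        rw [hc, Nat.sub_sub_self hp1]
        rfl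
      | some s =>
        simp only [Option.mem_def, Option.some.injEq, forall_eq'] at hp2
        refine ⟨List.replicate (k1 - r) 0 ++ List.replicate (k2 - s) 1,
          blocks_forall mem_S012_0 mem_S012_1, ?_⟩
        rw [leftQuotient_sdiff, leftQuotient_Cnt_of (blocks_forall mem_S012_0 mem_S012_1),
          leftQuotient_Cnt_of (blocks_forall mem_S01_0 mem_S01_1)]
        have hc0 : (List.replicate (k1 - r) (0:Fin 6) ++ List.replicate (k2 - s) 1).count 0
            = k1 - r := by
          simp [List.count_append, List.count_replicate]
        have hc1 : (List.replicate (k1 - r) (0:Fin 6) ++ List.replicate (k2 - s) 1).count 1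
            = k2 - s := by
          simp [List.count_append, List.count_replicate]
        rw [hc0, hc1, Nat.sub_sub_self hp1, Nat.sub_sub_self hp2]
        rfl)
    (by
      rintro ⟨r, o⟩ - ⟨r', o'⟩ - h
      have h' : (Cnt S012 0 r \ o.elim 0 (Cnt S01 1)) =
          (Cnt S012 0 r' \ o'.elim 0 (Cnt S01 1)) := h
      have hrr' : r = r' := by
        have e1 : ∀ t, r ≤ t ↔ r' ≤ t := by
          intro t
          constructor
          · intro ht
            have : (List.replicate t (0:Fin 6) ++ List.replicate 1 2) ∈
                (Cnt S012 0 r \ o.elim 0 (Cnt S01 1)) := ⟨x2_memA.2 ht, x2_memB' o⟩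
            rw [h'] at this
            exact x2_memA.1 this.1
          · intro ht
            have : (List.replicate t (0:Fin 6) ++ List.replicate 1 2) ∈
                (Cnt S012 0 r' \ o'.elim 0 (Cnt S01 1)) := ⟨x2_memA.2 ht, x2_memB' o'⟩
            rw [← h'] at this
            exact x2_memA.1 this.1
        have := (e1 r).1 le_rfl
        have := (e1 r').2 le_rfl
        omega
      subst hrr'
      have e2 : ∀ t : ℕ, (∀ s, o = some s → t < s) ↔ (∀ s, o' = some s → t < s) := by
        intro t
        constructor
        · intro ht
          have hmem : (List.replicate r (0:Fin 6) ++ List.replicate t 1) ∈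
              (Cnt S012 0 r \ o.elim 0 (Cnt S01 1)) := by
            refine ⟨y2_memA, ?_⟩
            cases o with
            | none => exact fun hc => hc
            | some s => exact fun hc => absurd (y2_memB.1 hc) (by have := ht s rfl; omega)
          rw [h'] at hmem
          intro s hs
          subst hs
          have := hmem.2
          by_contra hlt
          exact this (y2_memB.2 (by omega))
        · intro ht
          have hmem : (List.replicate r (0:Fin 6) ++ List.replicate t 1) ∈
              (Cnt S012 0 r \ o'.elim 0 (Cnt S01 1)) := by
            refine ⟨y2_memA, ?_⟩
            cases o' with
            | none => exact fun hc => hc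
            | some s => exact fun hc => absurd (y2_memB.1 hc) (by have := ht s rfl; omega)
          rw [← h'] at hmem
          intro s hs
          subst hs
          have := hmem.2
          by_contra hlt
          exact this (y2_memB.2 (by omega))
      have hoo : o = o' := by
        cases o with
        | none =>
          cases o' with
          | none => rfl
          | some s' =>
            exfalso
            have := (e2 s').1 (fun u hu => by cases hu) s' rfl
            omega
        | some s =>
          cases o' with
          | none =>
            exfalso
            have := (e2 s).2 (fun u hu => by cases hu) s rfl
            omega
          | some s' =>
            have hss : ∀ t, t < s ↔ t < s' := by
              intro t
              constructor
              · intro hts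
                exact ((e2 t).1 (fun u hu => by cases hu; exact hts)) s' rfl
              · intro hts
                exact ((e2 t).2 (fun u hu => by cases hu; exact hts)) s rfl
            have : s = s' := by
              rcases Nat.lt_trichotomy s s' with hl | he | hl
              · exact absurd ((hss s).2 hl) (lt_irrefl s)
              · exact he
              · exact absurd ((hss s').1 hl) (lt_irrefl s')
            rw [this]
      rw [hoo])
  have hcard : (Finset.Iic k1 ×ˢ Finset.insertNone (Finset.Iic k2)).card = (k1+1)*(k2+2) := by
    rw [Finset.card_product, Finset.card_insertNone, Nat.card_Iic, Nat.card_Iic]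
  rwa [hcard] at this


/- ### part 1 : union and symmetric difference -/

def S013 : Set (Fin 6) := {0, 1, 3}
def S0123 : Set (Fin 6) := {0, 1, 2, 3}

lemma mem_S013_0 : (0 : Fin 6) ∈ S013 := by left; rfl
lemma mem_S013_1 : (1 : Fin 6) ∈ S013 := by right; left; rfl
lemma mem_S013_3 : (3 : Fin 6) ∈ S013 := by right; right; rfl
lemma not_mem_S013_2 : (2 : Fin 6) ∉ S013 := by
  rintro (h | h | h) <;> exact absurd h (by decide)
lemma not_mem_S012_3 : (3 : Fin 6) ∉ S012 := by
  rintro (h | h | h) <;> exact absurd h (by decide)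
lemma mem_S0123_0 : (0 : Fin 6) ∈ S0123 := by left; rfl
lemma mem_S0123_1 : (1 : Fin 6) ∈ S0123 := by right; left; rfl
lemma mem_S0123_2 : (2 : Fin 6) ∈ S0123 := by right; right; left; rfl
lemma mem_S0123_3 : (3 : Fin 6) ∈ S0123 := by right; right; right; rfl

lemma S012_sub : S012 ⊆ S0123 := by
  rintro a (rfl | rfl | rfl)
  exacts [mem_S0123_0, mem_S0123_1, mem_S0123_2]
lemma S013_sub : S013 ⊆ S0123 := by
  rintro a (rfl | rfl | rfl)
  exacts [mem_S0123_0, mem_S0123_1, mem_S0123_3]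

/-- test word `0^t 2` versus first component -/
lemma xA_mem {t : ℕ} (o : Option ℕ) :
    (List.replicate t (0:Fin 6) ++ List.replicate 1 2) ∈
      o.elim (0 : Language (Fin 6)) (Cnt S012 0) ↔ ∃ r, o = some r ∧ r ≤ t := by
  cases o with
  | none => simp
  | some r =>
    show _ ∈ Cnt S012 0 r ↔ _
    rw [blocks_mem_Cnt]
    simp [mem_S012_0, mem_S012_2]

lemma xB_not {t : ℕ} (o : Option ℕ) :
    (List.replicate t (0:Fin 6) ++ List.replicate 1 2) ∉
      o.elim (0 : Language (Fin 6)) (Cnt S013 1) := by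
  cases o with
  | none => exact fun h => h
  | some s =>
    intro h
    have h2 : (List.replicate t (0:Fin 6) ++ List.replicate 1 2) ∈ Cnt S013 1 s := h
    rw [blocks_mem_Cnt] at h2
    exact not_mem_S013_2 (h2.1.2 one_ne_zero)

/-- test word `1^t 3` versus second component -/
lemma yB_mem {t : ℕ} (o : Option ℕ) :
    (List.replicate t (1:Fin 6) ++ List.replicate 1 3) ∈
      o.elim (0 : Language (Fin 6)) (Cnt S013 1) ↔ ∃ s, o = some s ∧ s ≤ t := by
  cases o with
  | none => simp
  | some s =>
    show _ ∈ Cnt S013 1 s ↔ _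
    rw [blocks_mem_Cnt]
    simp [mem_S013_1, mem_S013_3]

lemma yA_not {t : ℕ} (o : Option ℕ) :
    (List.replicate t (1:Fin 6) ++ List.replicate 1 3) ∉
      o.elim (0 : Language (Fin 6)) (Cnt S012 0) := by
  cases o with
  | none => exact fun h => h
  | some r =>
    intro h
    have h2 : (List.replicate t (1:Fin 6) ++ List.replicate 1 3) ∈ Cnt S012 0 r := h
    rw [blocks_mem_Cnt] at h2
    exact not_mem_S012_3 (h2.1.2 one_ne_zero)

lemma opt_eq {o o' : Option ℕ}
    (h : ∀ t, (∃ r, o = some r ∧ r ≤ t) ↔ (∃ r, o' = some r ∧ r ≤ t)) : o = o' := by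
  cases o with
  | none =>
    cases o' with
    | none => rfl
    | some r' =>
      exfalso
      obtain ⟨u, hu, -⟩ := (h r').2 ⟨r', rfl, le_rfl⟩
      cases hu
  | some r =>
    cases o' with
    | none =>
      exfalso
      obtain ⟨u, hu, -⟩ := (h r).1 ⟨r, rfl, le_rfl⟩
      cases hu
    | some r' =>
      obtain ⟨u, hu, hur⟩ := (h r).1 ⟨r, rfl, le_rfl⟩
      obtain ⟨v, hv, hvr⟩ := (h r').2 ⟨r', rfl, le_rfl⟩
      cases hu
      cases hv
      rw [Nat.le_antisymm hvr hur]

/-- the state of a word, and reachability words -/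
lemma count0_block {i j : ℕ} {y : Fin 6} (hy : y ≠ 0) :
    (List.replicate i (0:Fin 6) ++ List.replicate j y).count 0 = i := by
  simp [List.count_append, List.count_replicate, hy]

lemma part_union {k1 k2 : ℕ} (h1 : 2 ≤ k1) (h2 : 2 ≤ k2) :
    HasComplexity (Cnt S012 0 k1 ⊔ Cnt S013 1 k2) ((k1 + 2) * (k2 + 2)) := by
  have halpha : alphabetOf (Cnt S012 0 k1 ⊔ Cnt S013 1 k2) = S0123 := by
    apply Set.Subset.antisymm
    · refine alphabetOf_subset_of fun w hw a ha => ?_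
      rcases hw with hw | hw
      · exact S012_sub (hw.1 a ha)
      · exact S013_sub (hw.1 a ha)
    · have hw1 : (List.replicate k1 (0:Fin 6) ++ List.replicate 1 2) ∈
          (Cnt S012 0 k1 ⊔ Cnt S013 1 k2) := by
        left
        apply blocks_mem_Cnt.2
        simp [mem_S012_0, mem_S012_2]
      have hw2 : (List.replicate k2 (1:Fin 6) ++ List.replicate 1 3) ∈
          (Cnt S012 0 k1 ⊔ Cnt S013 1 k2) := by
        right
        apply blocks_mem_Cnt.2
        simp [mem_S013_1, mem_S013_3]
      rintro a (rfl | rfl | rfl | rfl)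
      · exact mem_alphabetOf_of hw1 (by simp [List.mem_replicate]; omega)
      · exact mem_alphabetOf_of hw2 (by simp [List.mem_replicate]; omega)
      · exact mem_alphabetOf_of hw1 (by simp [List.mem_replicate])
      · exact mem_alphabetOf_of hw2 (by simp [List.mem_replicate])
  have := hasComplexity_of (X := Cnt S012 0 k1 ⊔ Cnt S013 1 k2) (A := S0123)
    (fun p : Option ℕ × Option ℕ =>
      p.1.elim 0 (Cnt S012 0) ⊔ p.2.elim 0 (Cnt S013 1))
    (Finset.insertNone (Finset.Iic k1) ×ˢ Finset.insertNone (Finset.Iic k2))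
    halpha
    (fun w hw => by
      by_cases ha : ∀ a ∈ w, a ∈ S012 <;> by_cases hb : ∀ a ∈ w, a ∈ S013
      · refine ⟨(some (k1 - w.count 0), some (k2 - w.count 1)), by simp, ?_⟩
        rw [leftQuotient_sup, leftQuotient_Cnt_of ha, leftQuotient_Cnt_of hb]
        rfl
      · refine ⟨(some (k1 - w.count 0), none), by simp, ?_⟩
        rw [leftQuotient_sup, leftQuotient_Cnt_of ha, leftQuotient_Cnt_of_not hb]
        rfl
      · refine ⟨(none, some (k2 - w.count 1)), by simp, ?_⟩
        rw [leftQuotient_sup, leftQuotient_Cnt_of_not ha, leftQuotient_Cnt_of hb]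
        rfl
      · refine ⟨(none, none), by simp, ?_⟩
        rw [leftQuotient_sup, leftQuotient_Cnt_of_not ha, leftQuotient_Cnt_of_not hb]
        rfl)
    (fun p hp => by
      obtain ⟨o1, o2⟩ := p
      simp only [Finset.mem_product, Finset.mem_insertNone, Finset.mem_Iic] at hp
      obtain ⟨hp1, hp2⟩ := hp
      cases o1 with
      | none =>
        cases o2 with
        | none =>
          refine ⟨List.replicate 1 2 ++ List.replicate 1 3,
            blocks_forall mem_S0123_2 mem_S0123_3, ?_⟩
          rw [leftQuotient_sup,
            leftQuotient_Cnt_of_not (fun hall => not_mem_S012_3 (hall 3 (by simp))),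
            leftQuotient_Cnt_of_not (fun hall => not_mem_S013_2 (hall 2 (by simp)))]
          rfl
        | some s =>
          simp only [Option.mem_def, Option.some.injEq, forall_eq'] at hp2
          refine ⟨List.replicate 1 3 ++ List.replicate (k2 - s) 1,
            blocks_forall mem_S0123_3 mem_S0123_1, ?_⟩
          rw [leftQuotient_sup,
            leftQuotient_Cnt_of_not (fun hall => not_mem_S012_3 (hall 3 (by simp))),
            leftQuotient_Cnt_of (blocks_forall mem_S013_3 mem_S013_1)]
          have hc : (List.replicate 1 (3:Fin 6) ++ List.replicate (k2 - s) 1).count 1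
              = k2 - s := by
            simp [List.count_append, List.count_replicate]
          rw [hc, Nat.sub_sub_self hp2]
          rfl
      | some r =>
        simp only [Option.mem_def, Option.some.injEq, forall_eq'] at hp1
        cases o2 with
        | none =>
          refine ⟨List.replicate 1 2 ++ List.replicate (k1 - r) 0,
            blocks_forall mem_S0123_2 mem_S0123_0, ?_⟩
          rw [leftQuotient_sup,
            leftQuotient_Cnt_of (blocks_forall mem_S012_2 mem_S012_0),
            leftQuotient_Cnt_of_not (fun hall => not_mem_S013_2 (hall 2 (by simp)))]
          have hc : (List.replicate 1 (2:Fin 6) ++ List.replicate (k1 - r) 0).count 0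
              = k1 - r := by
            simp [List.count_append, List.count_replicate]
          rw [hc, Nat.sub_sub_self hp1]
          rfl
        | some s =>
          simp only [Option.mem_def, Option.some.injEq, forall_eq'] at hp2
          refine ⟨List.replicate (k1 - r) 0 ++ List.replicate (k2 - s) 1,
            blocks_forall mem_S0123_0 mem_S0123_1, ?_⟩
          rw [leftQuotient_sup,
            leftQuotient_Cnt_of (blocks_forall mem_S012_0 mem_S012_1),
            leftQuotient_Cnt_of (blocks_forall mem_S013_0 mem_S013_1)]
          have hc0 : (List.replicate (k1-r) (0:Fin 6) ++ List.replicate (k2-s) 1).count 0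
              = k1 - r := by
            simp [List.count_append, List.count_replicate]
          have hc1 : (List.replicate (k1-r) (0:Fin 6) ++ List.replicate (k2-s) 1).count 1
              = k2 - s := by
            simp [List.count_append, List.count_replicate]
          rw [hc0, hc1, Nat.sub_sub_self hp1, Nat.sub_sub_self hp2]
          rfl)
    (by
      rintro ⟨o1, o2⟩ - ⟨o1', o2'⟩ - h
      have h' : (o1.elim 0 (Cnt S012 0) ⊔ o2.elim 0 (Cnt S013 1)) =
          (o1'.elim 0 (Cnt S012 0) ⊔ o2'.elim 0 (Cnt S013 1)) := h
      have e1 : o1 = o1' := by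
        apply opt_eq
        intro t
        rw [← xA_mem (t := t) o1, ← xA_mem (t := t) o1']
        constructor
        · intro hx
          have : (List.replicate t (0:Fin 6) ++ List.replicate 1 2) ∈
              (o1.elim 0 (Cnt S012 0) ⊔ o2.elim 0 (Cnt S013 1)) := Or.inl hx
          rw [h'] at this
          exact this.resolve_right (xB_not o2')
        · intro hx
          have : (List.replicate t (0:Fin 6) ++ List.replicate 1 2) ∈
              (o1'.elim 0 (Cnt S012 0) ⊔ o2'.elim 0 (Cnt S013 1)) := Or.inl hx
          rw [← h'] at this
          exact this.resolve_right (xB_not o2)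
      have e2 : o2 = o2' := by
        apply opt_eq
        intro t
        rw [← yB_mem (t := t) o2, ← yB_mem (t := t) o2']
        constructor
        · intro hx
          have : (List.replicate t (1:Fin 6) ++ List.replicate 1 3) ∈
              (o1.elim 0 (Cnt S012 0) ⊔ o2.elim 0 (Cnt S013 1)) := Or.inr hx
          rw [h'] at this
          exact this.resolve_left (yA_not o1')
        · intro hx
          have : (List.replicate t (1:Fin 6) ++ List.replicate 1 3) ∈
              (o1'.elim 0 (Cnt S012 0) ⊔ o2'.elim 0 (Cnt S013 1)) := Or.inr hx
          rw [← h'] at this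
          exact this.resolve_left (yA_not o1)
      rw [e1, e2])
  have hcard : (Finset.insertNone (Finset.Iic k1) ×ˢ Finset.insertNone (Finset.Iic k2)).card
      = (k1+2)*(k2+2) := by
    rw [Finset.card_product, Finset.card_insertNone, Finset.card_insertNone,
      Nat.card_Iic, Nat.card_Iic]
  rwa [hcard] at this


lemma part_symdiff {k1 k2 : ℕ} (h1 : 2 ≤ k1) (h2 : 2 ≤ k2) :
    HasComplexity ((Cnt S012 0 k1 \ Cnt S013 1 k2) ⊔ (Cnt S013 1 k2 \ Cnt S012 0 k1))
      ((k1 + 2) * (k2 + 2)) := by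
  have hw1 : (List.replicate k1 (0:Fin 6) ++ List.replicate 1 2) ∈
      ((Cnt S012 0 k1 \ Cnt S013 1 k2) ⊔ (Cnt S013 1 k2 \ Cnt S012 0 k1)) := by
    left
    constructor
    · apply blocks_mem_Cnt.2
      simp [mem_S012_0, mem_S012_2]
    · intro hc
      exact not_mem_S013_2 (hc.1 2 (by simp))
  have hw2 : (List.replicate k2 (1:Fin 6) ++ List.replicate 1 3) ∈
      ((Cnt S012 0 k1 \ Cnt S013 1 k2) ⊔ (Cnt S013 1 k2 \ Cnt S012 0 k1)) := by
    right
    constructor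
    · apply blocks_mem_Cnt.2
      simp [mem_S013_1, mem_S013_3]
    · intro hc
      exact not_mem_S012_3 (hc.1 3 (by simp))
  have halpha : alphabetOf ((Cnt S012 0 k1 \ Cnt S013 1 k2) ⊔ (Cnt S013 1 k2 \ Cnt S012 0 k1))
      = S0123 := by
    apply Set.Subset.antisymm
    · refine alphabetOf_subset_of fun w hw a ha => ?_
      rcases hw with ⟨hw, -⟩ | ⟨hw, -⟩
      · exact S012_sub (hw.1 a ha)
      · exact S013_sub (hw.1 a ha)
    · rintro a (rfl | rfl | rfl | rfl)
      · exact mem_alphabetOf_of hw1 (by simp [List.mem_replicate]; omega)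
      · exact mem_alphabetOf_of hw2 (by simp [List.mem_replicate]; omega)
      · exact mem_alphabetOf_of hw1 (by simp [List.mem_replicate])
      · exact mem_alphabetOf_of hw2 (by simp [List.mem_replicate])
  have memx : ∀ (o1 o2 : Option ℕ) (t : ℕ),
      ((List.replicate t (0:Fin 6) ++ List.replicate 1 2) ∈
        ((o1.elim 0 (Cnt S012 0) \ o2.elim 0 (Cnt S013 1)) ⊔
          (o2.elim 0 (Cnt S013 1) \ o1.elim 0 (Cnt S012 0)))) ↔
        ∃ r, o1 = some r ∧ r ≤ t := by
    intro o1 o2 t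
    rw [← xA_mem (t := t) o1]
    constructor
    · rintro (⟨hx, -⟩ | ⟨hx, -⟩)
      · exact hx
      · exact absurd hx (xB_not o2)
    · intro hx
      exact Or.inl ⟨hx, xB_not o2⟩
  have memy : ∀ (o1 o2 : Option ℕ) (t : ℕ),
      ((List.replicate t (1:Fin 6) ++ List.replicate 1 3) ∈
        ((o1.elim 0 (Cnt S012 0) \ o2.elim 0 (Cnt S013 1)) ⊔
          (o2.elim 0 (Cnt S013 1) \ o1.elim 0 (Cnt S012 0)))) ↔
        ∃ s, o2 = some s ∧ s ≤ t := by
    intro o1 o2 t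
    rw [← yB_mem (t := t) o2]
    constructor
    · rintro (⟨hx, -⟩ | ⟨hx, -⟩)
      · exact absurd hx (yA_not o1)
      · exact hx
    · intro hx
      exact Or.inr ⟨hx, yA_not o1⟩
  have := hasComplexity_of
    (X := (Cnt S012 0 k1 \ Cnt S013 1 k2) ⊔ (Cnt S013 1 k2 \ Cnt S012 0 k1)) (A := S0123)
    (fun p : Option ℕ × Option ℕ =>
      (p.1.elim 0 (Cnt S012 0) \ p.2.elim 0 (Cnt S013 1)) ⊔
        (p.2.elim 0 (Cnt S013 1) \ p.1.elim 0 (Cnt S012 0)))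
    (Finset.insertNone (Finset.Iic k1) ×ˢ Finset.insertNone (Finset.Iic k2))
    halpha
    (fun w hw => by
      by_cases ha : ∀ a ∈ w, a ∈ S012 <;> by_cases hb : ∀ a ∈ w, a ∈ S013
      · refine ⟨(some (k1 - w.count 0), some (k2 - w.count 1)), by simp, ?_⟩
        rw [leftQuotient_sup, leftQuotient_sdiff, leftQuotient_sdiff,
          leftQuotient_Cnt_of ha, leftQuotient_Cnt_of hb]
        rfl
      · refine ⟨(some (k1 - w.count 0), none), by simp, ?_⟩
        rw [leftQuotient_sup, leftQuotient_sdiff, leftQuotient_sdiff,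
          leftQuotient_Cnt_of ha, leftQuotient_Cnt_of_not hb]
        rfl
      · refine ⟨(none, some (k2 - w.count 1)), by simp, ?_⟩
        rw [leftQuotient_sup, leftQuotient_sdiff, leftQuotient_sdiff,
          leftQuotient_Cnt_of_not ha, leftQuotient_Cnt_of hb]
        rfl
      · refine ⟨(none, none), by simp, ?_⟩
        rw [leftQuotient_sup, leftQuotient_sdiff, leftQuotient_sdiff,
          leftQuotient_Cnt_of_not ha, leftQuotient_Cnt_of_not hb]
        rfl)
    (fun p hp => by
      obtain ⟨o1, o2⟩ := p
      simp only [Finset.mem_product, Finset.mem_insertNone, Finset.mem_Iic] at hp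
      obtain ⟨hp1, hp2⟩ := hp
      cases o1 with
      | none =>
        cases o2 with
        | none =>
          refine ⟨List.replicate 1 2 ++ List.replicate 1 3,
            blocks_forall mem_S0123_2 mem_S0123_3, ?_⟩
          rw [leftQuotient_sup, leftQuotient_sdiff, leftQuotient_sdiff,
            leftQuotient_Cnt_of_not (fun hall => not_mem_S012_3 (hall 3 (by simp))),
            leftQuotient_Cnt_of_not (fun hall => not_mem_S013_2 (hall 2 (by simp)))]
          rfl
        | some s =>
          simp only [Option.mem_def, Option.some.injEq, forall_eq'] at hp2
          refine ⟨List.replicate 1 3 ++ List.replicate (k2 - s) 1,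
            blocks_forall mem_S0123_3 mem_S0123_1, ?_⟩
          rw [leftQuotient_sup, leftQuotient_sdiff, leftQuotient_sdiff,
            leftQuotient_Cnt_of_not (fun hall => not_mem_S012_3 (hall 3 (by simp))),
            leftQuotient_Cnt_of (blocks_forall mem_S013_3 mem_S013_1)]
          have hc : (List.replicate 1 (3:Fin 6) ++ List.replicate (k2 - s) 1).count 1
              = k2 - s := by
            simp [List.count_append, List.count_replicate]
          rw [hc, Nat.sub_sub_self hp2]
          rfl
      | some r =>
        simp only [Option.mem_def, Option.some.injEq, forall_eq'] at hp1
        cases o2 with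
        | none =>
          refine ⟨List.replicate 1 2 ++ List.replicate (k1 - r) 0,
            blocks_forall mem_S0123_2 mem_S0123_0, ?_⟩
          rw [leftQuotient_sup, leftQuotient_sdiff, leftQuotient_sdiff,
            leftQuotient_Cnt_of (blocks_forall mem_S012_2 mem_S012_0),
            leftQuotient_Cnt_of_not (fun hall => not_mem_S013_2 (hall 2 (by simp)))]
          have hc : (List.replicate 1 (2:Fin 6) ++ List.replicate (k1 - r) 0).count 0
              = k1 - r := by
            simp [List.count_append, List.count_replicate]
          rw [hc, Nat.sub_sub_self hp1]
          rfl
        | some s =>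
          simp only [Option.mem_def, Option.some.injEq, forall_eq'] at hp2
          refine ⟨List.replicate (k1 - r) 0 ++ List.replicate (k2 - s) 1,
            blocks_forall mem_S0123_0 mem_S0123_1, ?_⟩
          rw [leftQuotient_sup, leftQuotient_sdiff, leftQuotient_sdiff,
            leftQuotient_Cnt_of (blocks_forall mem_S012_0 mem_S012_1),
            leftQuotient_Cnt_of (blocks_forall mem_S013_0 mem_S013_1)]
          have hc0 : (List.replicate (k1-r) (0:Fin 6) ++ List.replicate (k2-s) 1).count 0
              = k1 - r := by
            simp [List.count_append, List.count_replicate]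
          have hc1 : (List.replicate (k1-r) (0:Fin 6) ++ List.replicate (k2-s) 1).count 1
              = k2 - s := by
            simp [List.count_append, List.count_replicate]
          rw [hc0, hc1, Nat.sub_sub_self hp1, Nat.sub_sub_self hp2]
          rfl)
    (by
      rintro ⟨o1, o2⟩ - ⟨o1', o2'⟩ - h
      have h' : ((o1.elim 0 (Cnt S012 0) \ o2.elim 0 (Cnt S013 1)) ⊔
            (o2.elim 0 (Cnt S013 1) \ o1.elim 0 (Cnt S012 0))) =
          ((o1'.elim 0 (Cnt S012 0) \ o2'.elim 0 (Cnt S013 1)) ⊔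
            (o2'.elim 0 (Cnt S013 1) \ o1'.elim 0 (Cnt S012 0))) := h
      have e1 : o1 = o1' := by
        apply opt_eq
        intro t
        rw [← memx o1 o2 t, ← memx o1' o2' t, h']
      have e2 : o2 = o2' := by
        apply opt_eq
        intro t
        rw [← memy o1 o2 t, ← memy o1' o2' t, h']
      rw [e1, e2])
  have hcard : (Finset.insertNone (Finset.Iic k1) ×ˢ Finset.insertNone (Finset.Iic k2)).card
      = (k1+2)*(k2+2) := by
    rw [Finset.card_product, Finset.card_insertNone, Finset.card_insertNone,
      Nat.card_Iic, Nat.card_Iic]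
  rwa [hcard] at this


/-- two-sided ideals meeting the unrestricted bounds for the boolean
operations: `(m+1)(n+1)` for union and symmetric difference, `m·n + m` for
difference, and `m·n` for intersection. -/
theorem two_sided_ideal_boolean_tight (m n : ℕ) (hm : 5 ≤ m) (hn : 5 ≤ n) :
    (∃ L' L : Language (Fin 6), IsTwoSidedIdeal L' ∧ IsTwoSidedIdeal L ∧
      (alphabetOf L' \ alphabetOf L).Nonempty ∧
      (alphabetOf L \ alphabetOf L').Nonempty ∧
      HasComplexity L' m ∧ HasComplexity L n ∧
      HasComplexity (L' ⊔ L) ((m + 1) * (n + 1)) ∧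
      HasComplexity ((L' \ L) ⊔ (L \ L')) ((m + 1) * (n + 1))) ∧
    (∃ L' L : Language (Fin 6), IsTwoSidedIdeal L' ∧ IsTwoSidedIdeal L ∧
      (alphabetOf L' \ alphabetOf L).Nonempty ∧
      HasComplexity L' m ∧ HasComplexity L n ∧
      HasComplexity (L' \ L) (m * n + m)) ∧
    (∃ L' L : Language (Fin 6), IsTwoSidedIdeal L' ∧ IsTwoSidedIdeal L ∧
      HasComplexity L' m ∧ HasComplexity L n ∧
      HasComplexity (L' ⊓ L) (m * n)) := by
  obtain ⟨k1, rfl⟩ : ∃ k, m = k + 1 := ⟨m - 1, by omega⟩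
  obtain ⟨k2, rfl⟩ : ∃ k, n = k + 1 := ⟨n - 1, by omega⟩
  have h1 : 2 ≤ k1 := by omega
  have h2 : 2 ≤ k2 := by omega
  have h1' : 1 ≤ k1 := by omega
  have h2' : 1 ≤ k2 := by omega
  refine ⟨⟨Cnt S012 0 k1, Cnt S013 1 k2, ?_, ?_, ?_, ?_, ?_, ?_, ?_, ?_⟩,
    ⟨Cnt S012 0 k1, Cnt S01 1 k2, ?_, ?_, ?_, ?_, ?_, ?_⟩,
    ⟨Cnt S01 0 k1, Cnt S01 1 k2, ?_, ?_, ?_, ?_, ?_⟩⟩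
  · exact isTwoSidedIdeal_Cnt mem_S012_0 h1'
  · exact isTwoSidedIdeal_Cnt mem_S013_1 h2'
  · rw [alphabetOf_Cnt mem_S012_0 h1', alphabetOf_Cnt mem_S013_1 h2']
    exact ⟨2, mem_S012_2, not_mem_S013_2⟩
  · rw [alphabetOf_Cnt mem_S012_0 h1', alphabetOf_Cnt mem_S013_1 h2']
    exact ⟨3, mem_S013_3, not_mem_S012_3⟩
  · exact hasComplexity_Cnt mem_S012_0 h1'
  · exact hasComplexity_Cnt mem_S013_1 h2'
  · exact part_union h1 h2
  · exact part_symdiff h1 h2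
  · exact isTwoSidedIdeal_Cnt mem_S012_0 h1'
  · exact isTwoSidedIdeal_Cnt mem_S01_1 h2'
  · rw [alphabetOf_Cnt mem_S012_0 h1', alphabetOf_Cnt mem_S01_1 h2']
    exact ⟨2, mem_S012_2, not_mem_S01_2⟩
  · exact hasComplexity_Cnt mem_S012_0 h1'
  · exact hasComplexity_Cnt mem_S01_1 h2'
  · rw [show (k1+1)*(k2+1) + (k1+1) = (k1+1)*(k2+2) by ring]
    exact part_diff h1' h2
  · exact isTwoSidedIdeal_Cnt mem_S01_0 h1'
  · exact isTwoSidedIdeal_Cnt mem_S01_1 h2'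
  · exact hasComplexity_Cnt mem_S01_0 h1'
  · exact hasComplexity_Cnt mem_S01_1 h2'
  · exact part_inter h1' h2'
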